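/- arXiv:2002.02799 — 3 statements merged into one kernel-verified Lean document; each statement's English description precedes it below -/
import Mathlib

section
/- Fix λ > 0 and p ≥ 1. If g : ℝ → ℝ satisfies 0 ≤ g ≤ λ and ∫_ℝ g = 1, then ∫_ℝ |x|^p g(x) dx ≥ (2^{-(p+1)}/(p+1)) λ^{-p}. -/
open MeasureTheory
open scoped ENNReal

theorem stmt_2 (lam p : ℝ) (hlam : 0 < lam) (hp : 1 ≤ p)
    (g : ℝ → ℝ) (hmeas : Measurable g) (hnn : ∀ x, 0 ≤ g x)
    (hle : ∀ x, g x ≤ lam) (hmass : ∫ x, g x = 1) :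
    ENNReal.ofReal (2 ^ (-(p + 1)) / (p + 1) * lam ^ (-p)) ≤
      ∫⁻ x, ENNReal.ofReal (|x| ^ p * g x) := by
  set a : ℝ := (2 * lam)⁻¹ with ha
  have ha0 : 0 < a := by positivity
  have hp0 : 0 < p := lt_of_lt_of_le one_pos hp
  have hint : Integrable g := by
    by_contra h
    rw [integral_undef h] at hmass; norm_num at hmass
  have hG : ∫⁻ x, ENNReal.ofReal (g x) = 1 := by
    rw [← ofReal_integral_eq_lintegral_ofReal hint (Filter.Eventually.of_forall hnn), hmass]
    simp
  set s : Set ℝ := Set.Icc (-a) a with hs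
  have hsm : MeasurableSet s := measurableSet_Icc
  have hμs : volume s = ENNReal.ofReal (2 * a) := by
    rw [hs, Real.volume_Icc]; ring_nf
  set A : ℝ≥0∞ := ENNReal.ofReal (a ^ p) with hA
  have hAne : A ≠ ⊤ := ENNReal.ofReal_ne_top
  set F : ℝ → ℝ≥0∞ := fun x => ENNReal.ofReal (|x| ^ p * g x) with hF
  set G : ℝ → ℝ≥0∞ := fun x => ENNReal.ofReal (g x) with hGdef
  have hFm : Measurable F := by
    apply Measurable.ennreal_ofReal
    exact ((continuous_abs.rpow_const (fun x => Or.inr hp0.le)).measurable).mul hmeas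
  have hGm : Measurable G := hmeas.ennreal_ofReal
  have hJm : Measurable (fun x : ℝ => ENNReal.ofReal (lam * |x| ^ p)) := by
    apply Measurable.ennreal_ofReal
    exact measurable_const.mul (continuous_abs.rpow_const (fun x => Or.inr hp0.le)).measurable
  -- pointwise on s
  have hpt_s : ∀ x ∈ s, ENNReal.ofReal (lam * |x| ^ p) + A * G x
      ≤ F x + A * ENNReal.ofReal lam := by
    intro x hx
    have hxa : |x| ≤ a := abs_le.2 ⟨hx.1, hx.2⟩
    have hb : |x| ^ p ≤ a ^ p := Real.rpow_le_rpow (abs_nonneg x) hxa hp0.le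
    have hbn : (0:ℝ) ≤ |x| ^ p := Real.rpow_nonneg (abs_nonneg x) p
    have han : (0:ℝ) ≤ a ^ p := Real.rpow_nonneg ha0.le p
    rw [hA, ← ENNReal.ofReal_mul han, ← ENNReal.ofReal_mul han,
      ← ENNReal.ofReal_add (mul_nonneg hlam.le hbn) (mul_nonneg han (hnn x)),
      ← ENNReal.ofReal_add (mul_nonneg hbn (hnn x)) (mul_nonneg han hlam.le)]
    apply ENNReal.ofReal_le_ofReal
    nlinarith [hle x, hnn x]
  -- pointwise off s
  have hpt_c : ∀ x ∈ sᶜ, A * G x ≤ F x := by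
    intro x hx
    have hxa : a ≤ |x| := by
      by_contra h
      push_neg at h
      exact hx ⟨(abs_lt.1 h).1.le, (abs_lt.1 h).2.le⟩
    have hb : a ^ p ≤ |x| ^ p := Real.rpow_le_rpow ha0.le hxa hp0.le
    rw [hA, hF, hGdef, ← ENNReal.ofReal_mul (Real.rpow_nonneg ha0.le p)]
    exact ENNReal.ofReal_le_ofReal (mul_le_mul_of_nonneg_right hb (hnn x))
  -- main inequality with cancellation constant
  have key : (∫⁻ x in s, ENNReal.ofReal (lam * |x| ^ p)) + A
      ≤ (∫⁻ x, F x) + A := by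
    have hsplitF : ∫⁻ x, F x = (∫⁻ x in s, F x) + ∫⁻ x in sᶜ, F x :=
      (lintegral_add_compl F hsm).symm
    have hsplitG : (∫⁻ x in s, A * G x) + ∫⁻ x in sᶜ, A * G x = A := by
      rw [lintegral_add_compl (fun x => A * G x) hsm, lintegral_const_mul _ hGm, hG, mul_one]
    have h1 : (∫⁻ x in s, ENNReal.ofReal (lam * |x| ^ p)) + ∫⁻ x in s, A * G x
        ≤ (∫⁻ x in s, F x) + A * ENNReal.ofReal lam * volume s := by
      calc (∫⁻ x in s, ENNReal.ofReal (lam * |x| ^ p)) + ∫⁻ x in s, A * G x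
          = ∫⁻ x in s, (ENNReal.ofReal (lam * |x| ^ p) + A * G x) :=
            (lintegral_add_left hJm _).symm
        _ ≤ ∫⁻ x in s, (F x + A * ENNReal.ofReal lam) :=
            setLIntegral_mono (hFm.add measurable_const) hpt_s
        _ = (∫⁻ x in s, F x) + A * ENNReal.ofReal lam * volume s := by
            rw [lintegral_add_right _ measurable_const, setLIntegral_const]
    have h2 : ∫⁻ x in sᶜ, A * G x ≤ ∫⁻ x in sᶜ, F x :=
      setLIntegral_mono hFm hpt_c
    have hAc : A * ENNReal.ofReal lam * volume s = A := by
      rw [hμs, hA, ← ENNReal.ofReal_mul (Real.rpow_nonneg ha0.le p),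
        ← ENNReal.ofReal_mul (by positivity)]
      congr 1
      have : lam * (2 * a) = 1 := by
        rw [ha]; field_simp; try ring
      rw [mul_assoc]
      rw [this, mul_one]
    calc (∫⁻ x in s, ENNReal.ofReal (lam * |x| ^ p)) + A
        = ((∫⁻ x in s, ENNReal.ofReal (lam * |x| ^ p)) + ∫⁻ x in s, A * G x)
          + ∫⁻ x in sᶜ, A * G x := by rw [add_assoc, hsplitG]
      _ ≤ ((∫⁻ x in s, F x) + A * ENNReal.ofReal lam * volume s) + ∫⁻ x in sᶜ, F x :=
          add_le_add h1 h2
      _ = (∫⁻ x, F x) + A := by rw [hsplitF, hAc]; ring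
  have main : ∫⁻ x in s, ENNReal.ofReal (lam * |x| ^ p) ≤ ∫⁻ x, F x :=
    (ENNReal.add_le_add_iff_right hAne).1 key
  -- lower bound for the half interval
  have hsub : Set.Ioc (0:ℝ) a ⊆ s := fun x hx => ⟨by linarith [hx.1, ha0], hx.2⟩
  have hlow : ∫⁻ x in Set.Ioc (0:ℝ) a, ENNReal.ofReal (lam * x ^ p)
      ≤ ∫⁻ x in s, ENNReal.ofReal (lam * |x| ^ p) := by
    have := lintegral_mono' (μ := volume.restrict (Set.Ioc (0:ℝ) a))
      (ν := volume.restrict s) (Measure.restrict_mono hsub le_rfl)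
      (le_refl (fun x : ℝ => ENNReal.ofReal (lam * |x| ^ p)))
    refine le_trans (le_of_eq ?_) this
    apply setLIntegral_congr_fun measurableSet_Ioc
    intro x hx; show ENNReal.ofReal (lam * x ^ p) = ENNReal.ofReal (lam * |x| ^ p)
    rw [abs_of_pos hx.1]
  have hInt : IntegrableOn (fun x : ℝ => lam * x ^ p) (Set.Ioc 0 a) := by
    have : IntervalIntegrable (fun x : ℝ => x ^ p) volume 0 a :=
      intervalIntegral.intervalIntegrable_rpow (Or.inl (by linarith))
    have := this.const_mul lam
    rwa [intervalIntegrable_iff_integrableOn_Ioc_of_le ha0.le] at this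
  have heq : ∫⁻ x in Set.Ioc (0:ℝ) a, ENNReal.ofReal (lam * x ^ p)
      = ENNReal.ofReal (∫ x in Set.Ioc (0:ℝ) a, lam * x ^ p) := by
    rw [← ofReal_integral_eq_lintegral_ofReal hInt]
    apply (ae_restrict_iff' measurableSet_Ioc).2
    filter_upwards with x hx
    have : (0:ℝ) ≤ x ^ p := Real.rpow_nonneg hx.1.le p
    positivity
  have hval : ∫ x in Set.Ioc (0:ℝ) a, lam * x ^ p = lam * (a ^ (p + 1) / (p + 1)) := by
    rw [← intervalIntegral.integral_of_le ha0.le, intervalIntegral.integral_const_mul,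
      integral_rpow (Or.inl (by linarith))]
    rw [Real.zero_rpow (by linarith)]
    ring
  have harith : 2 ^ (-(p + 1)) / (p + 1) * lam ^ (-p) = lam * (a ^ (p + 1) / (p + 1)) := by
    have h2l : (0:ℝ) < 2 * lam := by positivity
    have e1 : a ^ (p + 1) = (2:ℝ) ^ (-(p + 1)) * lam ^ (-(p + 1)) := by
      rw [ha, Real.inv_rpow h2l.le, Real.mul_rpow (by norm_num) hlam.le,
        Real.rpow_neg (by norm_num : (0:ℝ) ≤ 2), Real.rpow_neg hlam.le, mul_inv]
    have e2 : lam * lam ^ (-(p + 1)) = lam ^ (-p) := by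
      have h := Real.rpow_add hlam 1 (-(p + 1))
      rw [Real.rpow_one] at h
      rw [← h]
      ring_nf
    rw [e1, ← e2]
    ring
  calc ENNReal.ofReal (2 ^ (-(p + 1)) / (p + 1) * lam ^ (-p))
      = ∫⁻ x in Set.Ioc (0:ℝ) a, ENNReal.ofReal (lam * x ^ p) := by
        rw [heq, hval, harith]
    _ ≤ ∫⁻ x in s, ENNReal.ofReal (lam * |x| ^ p) := hlow
    _ ≤ ∫⁻ x, F x := main
end

section
/- Let g : ℝ → ℝ be a C¹, nonnegative, integrable function with ∫ g = 1, attaining its maximum M > 0 at some point, and with g(x) → 0 as x → -∞. Let E = ∫ g² and D = ∫ (g')². Then M - E ≥ M⁴/(81 D) (in particular D > 0 when M > 0). -/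
open MeasureTheory Filter

set_option maxHeartbeats 1000000 in
theorem stmt_4 (g : ℝ → ℝ) (hg : ContDiff ℝ 1 g) (hnn : ∀ x, 0 ≤ g x)
    (hint : Integrable g) (hmass : ∫ x, g x = 1)
    (hsq : Integrable (fun x => (g x) ^ 2))
    (hD : Integrable (fun x => (deriv g x) ^ 2))
    (x₀ : ℝ) (hmax : ∀ x, g x ≤ g x₀) (hM : 0 < g x₀)
    (hlim : Tendsto g atBot (nhds 0)) :
    g x₀ - ∫ x, (g x) ^ 2 ≥ (g x₀) ^ 4 / (81 * ∫ x, (deriv g x) ^ 2) := by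
  set M := g x₀ with hMdef
  set E := ∫ x, (g x) ^ 2 with hEdef
  set D := ∫ x, (deriv g x) ^ 2 with hDdef
  have hcg : Continuous g := hg.continuous
  have hcg' : Continuous (deriv g) := hg.continuous_deriv le_rfl
  have hsub : Integrable (fun x => M * g x - (g x) ^ 2) := (hint.const_mul M).sub hsq
  have hnn2 : ∀ x, 0 ≤ M * g x - (g x) ^ 2 := fun x => by nlinarith [hnn x, hmax x]
  have hkey : M - E = ∫ x, (M * g x - (g x) ^ 2) := by
    rw [integral_sub (hint.const_mul M) hsq, integral_const_mul, hmass]; ring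
  have hDnn : 0 ≤ D := integral_nonneg fun x => sq_nonneg _
  rcases eq_or_lt_of_le hDnn with hD0 | hDpos
  · rw [← hD0]
    simp only [mul_zero, div_zero, ge_iff_le]
    rw [hkey]
    exact integral_nonneg hnn2
  -- find a with g a < M/3 and a < x₀
  obtain ⟨a, ha1, ha2⟩ := ((hlim.eventually_lt_const (by linarith : (0:ℝ) < M / 3)).and
    (eventually_lt_atBot x₀)).exists
  have hax₀ : a ≤ x₀ := ha2.le
  have hgx0 : g x₀ = M := hMdef.symm
  -- construct x₂
  set S₂ : Set ℝ := Set.Icc a x₀ ∩ g ⁻¹' {2 / 3 * M} with hS₂def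
  have hS₂closed : IsClosed S₂ := isClosed_Icc.inter (isClosed_singleton.preimage hcg)
  have hS₂ne : S₂.Nonempty := by
    obtain ⟨z, hz1, hz2⟩ := intermediate_value_Icc hax₀ hcg.continuousOn
      (show (2 / 3 * M : ℝ) ∈ Set.Icc (g a) (g x₀) from
        Set.mem_Icc.mpr ⟨by linarith, by rw [hgx0]; linarith⟩)
    exact ⟨z, hz1, hz2⟩
  have hS₂bdd : BddBelow S₂ := ⟨a, fun x hx => hx.1.1⟩
  set x₂ := sInf S₂ with hx₂def
  have hx₂mem : x₂ ∈ S₂ := hS₂closed.csInf_mem hS₂ne hS₂bdd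
  have hgx₂ : g x₂ = 2 / 3 * M := hx₂mem.2
  have hax₂ : a ≤ x₂ := hx₂mem.1.1
  have hx₂lt : ∀ y, a ≤ y → y < x₂ → g y < 2 / 3 * M := by
    intro y hay hyx₂ ; by_contra h
    push_neg at h
    obtain ⟨z, hz1, hz2⟩ := intermediate_value_Icc hay hcg.continuousOn
      (show (2 / 3 * M : ℝ) ∈ Set.Icc (g a) (g y) from Set.mem_Icc.mpr ⟨by linarith, h⟩)
    have hzS : z ∈ S₂ := ⟨⟨hz1.1, hz1.2.trans (hyx₂.le.trans hx₂mem.1.2)⟩, hz2⟩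
    have : x₂ ≤ z := csInf_le hS₂bdd hzS
    linarith [hz1.2]
  -- construct x₁
  set S₁ : Set ℝ := Set.Icc a x₂ ∩ g ⁻¹' {1 / 3 * M} with hS₁def
  have hS₁closed : IsClosed S₁ := isClosed_Icc.inter (isClosed_singleton.preimage hcg)
  have hS₁ne : S₁.Nonempty := by
    obtain ⟨z, hz1, hz2⟩ := intermediate_value_Icc hax₂ hcg.continuousOn
      (show (1 / 3 * M : ℝ) ∈ Set.Icc (g a) (g x₂) from
        Set.mem_Icc.mpr ⟨by linarith, by rw [hgx₂]; linarith⟩)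
    exact ⟨z, hz1, hz2⟩
  have hS₁bdd : BddAbove S₁ := ⟨x₂, fun x hx => hx.1.2⟩
  set x₁ := sSup S₁ with hx₁def
  have hx₁mem : x₁ ∈ S₁ := hS₁closed.csSup_mem hS₁ne hS₁bdd
  have hgx₁ : g x₁ = 1 / 3 * M := hx₁mem.2
  have hx₁x₂ : x₁ ≤ x₂ := hx₁mem.1.2
  have hax₁ : a ≤ x₁ := hx₁mem.1.1
  have hx₁gt : ∀ y, x₁ < y → y ≤ x₂ → 1 / 3 * M < g y := by
    intro y hx₁y hyx₂ ; by_contra h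
    push_neg at h
    obtain ⟨z, hz1, hz2⟩ := intermediate_value_Icc hyx₂ hcg.continuousOn
      (show (1 / 3 * M : ℝ) ∈ Set.Icc (g y) (g x₂) from
        Set.mem_Icc.mpr ⟨h, by rw [hgx₂]; linarith⟩)
    have hzS : z ∈ S₁ := ⟨⟨hax₁.trans (hx₁y.le.trans hz1.1), hz1.2⟩, hz2⟩
    have : z ≤ x₁ := le_csSup hS₁bdd hzS
    linarith [hz1.1]
  have hlt : x₁ < x₂ := lt_of_le_of_ne hx₁x₂ (by
    intro h; rw [h, hgx₂] at hgx₁; linarith)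
  -- bounds on [x₁, x₂]
  have hbound : ∀ y ∈ Set.Icc x₁ x₂, 1 / 3 * M ≤ g y ∧ g y ≤ 2 / 3 * M := by
    intro y hy
    obtain ⟨h1, h2⟩ := hy
    constructor
    · rcases eq_or_lt_of_le h1 with h | h
      · rw [← h, hgx₁]
      · exact (hx₁gt y h h2).le
    · rcases eq_or_lt_of_le h2 with h | h
      · rw [h, hgx₂]
      · exact (hx₂lt y (le_trans hax₁ h1) h).le
  set L := x₂ - x₁ with hLdef
  have hLpos : 0 < L := sub_pos.mpr hlt
  -- FTC
  have hftc : ∫ x in x₁..x₂, deriv g x = g x₂ - g x₁ :=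
    intervalIntegral.integral_deriv_eq_sub
      (fun x _ => (hg.differentiable one_ne_zero).differentiableAt)
      (hcg'.intervalIntegrable _ _)
  -- ∫ over interval of deriv² ≤ D
  have hDle : ∫ x in x₁..x₂, (deriv g x) ^ 2 ≤ D := by
    rw [intervalIntegral.integral_of_le hlt.le]
    exact setIntegral_le_integral hD (Eventually.of_forall fun x => sq_nonneg _)
  -- pointwise AM-GM with c = sqrt(D/L)
  set c := Real.sqrt (D / L) with hcdef
  have hcpos : 0 < c := Real.sqrt_pos.mpr (by positivity)
  have hc2 : c ^ 2 = D / L := Real.sq_sqrt (by positivity)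
  have h2c : (0:ℝ) < 2 * c := by positivity
  have hptwise : ∀ x ∈ Set.Icc x₁ x₂, deriv g x ≤ c / 2 + (deriv g x) ^ 2 / (2 * c) := by
    intro x _
    have h1 : deriv g x ≤ (c * c + (deriv g x) ^ 2) / (2 * c) := by
      rw [le_div_iff₀ h2c]; nlinarith [sq_nonneg (deriv g x - c)]
    have heq : (c * c + (deriv g x) ^ 2) / (2 * c) = c / 2 + (deriv g x) ^ 2 / (2 * c) := by
      field_simp
    linarith [heq ▸ h1]
  have hmono : ∫ x in x₁..x₂, deriv g x ≤ ∫ x in x₁..x₂, (c / 2 + (deriv g x) ^ 2 / (2 * c)) := by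
    apply intervalIntegral.integral_mono_on hlt.le
    · exact hcg'.intervalIntegrable _ _
    · exact (intervalIntegrable_const).add (((hcg'.pow 2).div_const _).intervalIntegrable _ _)
    · exact hptwise
  have hcomp : ∫ x in x₁..x₂, (c / 2 + (deriv g x) ^ 2 / (2 * c))
      = c / 2 * L + (∫ x in x₁..x₂, (deriv g x) ^ 2) / (2 * c) := by
    rw [intervalIntegral.integral_add (f := fun _ => c / 2) (g := fun x => (deriv g x) ^ 2 / (2 * c)) intervalIntegrable_const
      (((hcg'.pow 2).div_const _).intervalIntegrable _ _),
      intervalIntegral.integral_const, intervalIntegral.integral_div]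
    rw [smul_eq_mul, hLdef]; ring
  have hstep : M / 3 ≤ c / 2 * L + D / (2 * c) := by
    have h1 : M / 3 = ∫ x in x₁..x₂, deriv g x := by
      rw [hftc, hgx₂, hgx₁]; ring
    have h2 : (∫ x in x₁..x₂, (deriv g x) ^ 2) / (2 * c) ≤ D / (2 * c) := by gcongr
    rw [h1]
    calc ∫ x in x₁..x₂, deriv g x ≤ _ := hmono
      _ = c / 2 * L + (∫ x in x₁..x₂, (deriv g x) ^ 2) / (2 * c) := hcomp
      _ ≤ c / 2 * L + D / (2 * c) := by linarith
  -- derive M² ≤ 9 D L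
  have hcL : c ^ 2 * L = D := by rw [hc2]; field_simp
  have hMc : M * c ≤ 3 * D := by
    have h := mul_le_mul_of_nonneg_right hstep h2c.le
    have hD' : D / (2 * c) * (2 * c) = D := div_mul_cancel₀ _ (ne_of_gt h2c)
    nlinarith [hcL]
  have hM2 : M ^ 2 ≤ 9 * D * L := by
    have h3 : (M * c) * (M * c) ≤ (3 * D) * (3 * D) :=
      mul_le_mul hMc hMc (mul_nonneg hM.le hcpos.le) (by positivity)
    have h4 : M ^ 2 * (c ^ 2 * L) = M ^ 2 * D := by rw [hcL]
    have h5 : M ^ 2 * D ≤ 9 * D ^ 2 * L := by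
      nlinarith [mul_le_mul_of_nonneg_right h3 hLpos.le, h4]
    nlinarith [h5, hDpos]
  -- lower bound the integral
  have hlow : (1 / 3 * M) * (1 / 3 * M) * L ≤ ∫ x in x₁..x₂, (M * g x - (g x) ^ 2) := by
    have hin := intervalIntegral.integral_mono_on (μ := volume) (f := fun _ => (1 / 3 * M) * (1 / 3 * M))
      (g := fun x => M * g x - (g x) ^ 2) hlt.le intervalIntegrable_const
      (((continuous_const.mul hcg).sub (hcg.pow 2)).intervalIntegrable _ _) ?_
    · rw [intervalIntegral.integral_const, smul_eq_mul, ← hLdef] at hin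
      linarith [hin]
    · intro x hx
      obtain ⟨h1, h2⟩ := hbound x hx
      nlinarith [hnn x]
  have hset : ∫ x in x₁..x₂, (M * g x - (g x) ^ 2) ≤ M - E := by
    rw [hkey, intervalIntegral.integral_of_le hlt.le]
    exact setIntegral_le_integral hsub (Eventually.of_forall hnn2)
  -- conclude
  have hfinal : M ^ 4 / (81 * D) ≤ (1 / 3 * M) * (1 / 3 * M) * L := by
    rw [div_le_iff₀ (by positivity)]
    nlinarith [mul_le_mul_of_nonneg_left hM2 (sq_nonneg M)]
  linarith
end

section
/- Let M, E, D : (0,∞) → [0,∞) satisfy: (i) M(t₂) ≤ M(t₁) + ∫_{t₁}^{t₂}(E(s)M(s) - M(s)²) ds for all 0 < t₁ < t₂; (ii) E(t₂) ≤ E(t₁) - ∫_{t₁}^{t₂} D(s) ds for all 0 < t₁ < t₂; (iii) E(t) ≤ M(t) for all t; (iv) M(t) - E(t) ≥ M(t)⁴/(C₁ D(t)) for all t with D(t) > 0, where C₁ > 0 is a constant. Assume M, E, D are continuous, D > 0, and t^{2/3} M(t) → 0 as t → 0⁺. Then M(t) ≤ 2C₁^{1/3} t^{-2/3} for all t > 0.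 -/
open MeasureTheory Filter intervalIntegral

lemma aux_cs (D : ℝ → ℝ) (t₁ t₂ : ℝ) (h12 : t₁ < t₂)
    (hD : ∀ s ∈ Set.Icc t₁ t₂, 0 < D s)
    (hDc : ContinuousOn D (Set.Icc t₁ t₂)) :
    (t₂ - t₁) ^ 2 ≤ (∫ s in t₁..t₂, D s) * (∫ s in t₁..t₂, 1 / D s) := by
  have huIcc : Set.uIcc t₁ t₂ = Set.Icc t₁ t₂ := Set.uIcc_of_le h12.le
  have hIntD : IntervalIntegrable D volume t₁ t₂ :=
    (hDc.mono huIcc.le).intervalIntegrable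
  have hinvc : ContinuousOn (fun s => 1 / D s) (Set.Icc t₁ t₂) := by
    exact ContinuousOn.div continuousOn_const hDc fun s hs => (hD s hs).ne'
  have hIntinv : IntervalIntegrable (fun s => 1 / D s) volume t₁ t₂ :=
    (hinvc.mono huIcc.le).intervalIntegrable
  set I := ∫ s in t₁..t₂, D s with hI
  set J := ∫ s in t₁..t₂, 1 / D s with hJ
  have hIpos : 0 < I := by
    apply intervalIntegral_pos_of_pos_on hIntD _ h12
    intro s hs
    exact hD s ⟨hs.1.le, hs.2.le⟩
  set L := t₂ - t₁ with hL
  have hLpos : 0 < L := by simp [hL]; linarith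
  set lam := L / I with hlam
  have hlampos : 0 < lam := div_pos hLpos hIpos
  have key : (2 : ℝ) * L ≤ lam * I + (1/lam) * J := by
    have h1 : ∫ s in t₁..t₂, (2:ℝ) = 2 * L := by simp [hL]; ring
    rw [← h1]
    have h2 : lam * I + (1/lam) * J
        = ∫ s in t₁..t₂, (lam * D s + (1/lam) * (1 / D s)) := by
      rw [intervalIntegral.integral_add (hIntD.const_mul _) (hIntinv.const_mul _),
        intervalIntegral.integral_const_mul, intervalIntegral.integral_const_mul]
    rw [h2]
    apply intervalIntegral.integral_mono_on h12.le intervalIntegrable_const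
      ((((continuousOn_const.mul hDc).add (continuousOn_const.mul hinvc)).mono huIcc.le).intervalIntegrable)
    intro s hs
    have hDs := hD s hs
    have hx : 0 < lam * D s := mul_pos hlampos hDs
    have h1x : (lam * D s) * (1/(lam * D s)) = 1 := by field_simp
    have : lam * D s + 1/(lam * D s) ≥ 2 := by
      nlinarith [sq_nonneg (lam * D s - 1), hx, h1x]
    have hrw : (1:ℝ)/(lam * D s) = (1/lam) * (1/D s) := by
      field_simp
    show 2 ≤ lam * D s + (1/lam) * (1/D s)
    linarith [hrw ▸ this]
  have h3 : lam * I = L := by rw [hlam]; exact div_mul_cancel₀ L hIpos.ne'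
  have h4 : (1/lam) * J = I * J / L := by
    rw [hlam]
    field_simp
  rw [h3, h4] at key
  have : L ≤ I * J / L := by linarith
  calc L ^ 2 = L * L := sq L
    _ ≤ (I * J / L) * L := by nlinarith
    _ = I * J := by field_simp

set_option maxHeartbeats 2000000 in
theorem stmt_19 (C₁ : ℝ) (hC₁ : 0 < C₁) (M E D : ℝ → ℝ)
    (hMnn : ∀ t, 0 < t → 0 ≤ M t) (hEnn : ∀ t, 0 < t → 0 ≤ E t)
    (hDpos : ∀ t, 0 < t → 0 < D t)
    (hMcont : ContinuousOn M (Set.Ioi (0 : ℝ)))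
    (hEcont : ContinuousOn E (Set.Ioi (0 : ℝ)))
    (hDcont : ContinuousOn D (Set.Ioi (0 : ℝ)))
    (hi : ∀ t₁ t₂, 0 < t₁ → t₁ < t₂ →
      M t₂ ≤ M t₁ + ∫ s in t₁..t₂, (E s * M s - (M s) ^ 2))
    (hii : ∀ t₁ t₂, 0 < t₁ → t₁ < t₂ →
      E t₂ ≤ E t₁ - ∫ s in t₁..t₂, D s)
    (hiii : ∀ t, 0 < t → E t ≤ M t)
    (hiv : ∀ t, 0 < t → M t - E t ≥ (M t) ^ 4 / (C₁ * D t))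
    (hlim : Tendsto (fun t => t ^ ((2 : ℝ) / 3) * M t)
      (nhdsWithin 0 (Set.Ioi 0)) (nhds 0)) :
    ∀ t : ℝ, 0 < t → M t ≤ 2 * C₁ ^ ((1 : ℝ) / 3) * t ^ (-(2 : ℝ) / 3) := by
  -- key differential inequality
  have key : ∀ t₁ t₂, 0 < t₁ → t₁ < t₂ →
      M t₂ + (∫ s in t₁..t₂, (M s) ^ 5 / (C₁ * D s)) ≤ M t₁ := by
    intro t₁ t₂ h1 h12
    have hsub : Set.Icc t₁ t₂ ⊆ Set.Ioi (0:ℝ) := fun x hx => lt_of_lt_of_le h1 hx.1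
    have huIcc : Set.uIcc t₁ t₂ = Set.Icc t₁ t₂ := Set.uIcc_of_le h12.le
    have hMc := hMcont.mono hsub
    have hEc := hEcont.mono hsub
    have hDc := hDcont.mono hsub
    have hG : ContinuousOn (fun s => (M s) ^ 5 / (C₁ * D s)) (Set.Icc t₁ t₂) :=
      (hMc.pow 5).div (continuousOn_const.mul hDc)
        (fun s hs => (mul_pos hC₁ (hDpos s (hsub hs))).ne')
    have hF : ContinuousOn (fun s => E s * M s - (M s) ^ 2) (Set.Icc t₁ t₂) :=
      (hEc.mul hMc).sub (hMc.pow 2)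
    have hInt1 : IntervalIntegrable (fun s => E s * M s - (M s) ^ 2) volume t₁ t₂ :=
      (hF.mono huIcc.le).intervalIntegrable
    have hInt2 : IntervalIntegrable (fun s => -((M s) ^ 5 / (C₁ * D s))) volume t₁ t₂ :=
      ((hG.neg).mono huIcc.le).intervalIntegrable
    have hmono : (∫ s in t₁..t₂, (E s * M s - (M s) ^ 2))
        ≤ ∫ s in t₁..t₂, -((M s) ^ 5 / (C₁ * D s)) := by
      apply intervalIntegral.integral_mono_on h12.le hInt1 hInt2
      intro s hs
      have hs0 : 0 < s := hsub hs
      have h4 := hiv s hs0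
      have hMs := hMnn s hs0
      have hm : M s * ((M s) ^ 4 / (C₁ * D s)) ≤ M s * (M s - E s) :=
        mul_le_mul_of_nonneg_left h4 hMs
      have hrw : M s * ((M s) ^ 4 / (C₁ * D s)) = (M s) ^ 5 / (C₁ * D s) := by
        rw [mul_div_assoc']; ring_nf
      nlinarith [hm, hrw]
    have hI := hi t₁ t₂ h1 h12
    rw [intervalIntegral.integral_neg] at hmono
    linarith
  have hanti : ∀ s t₂, 0 < s → s < t₂ → M t₂ ≤ M s := by
    intro s t₂ h1 h12
    have hk := key s t₂ h1 h12
    have hnn : 0 ≤ ∫ x in s..t₂, (M x) ^ 5 / (C₁ * D x) :=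
      intervalIntegral.integral_nonneg h12.le (fun x hx =>
        div_nonneg (pow_nonneg (hMnn x (lt_of_lt_of_le h1 hx.1)) 5)
          (mul_pos hC₁ (hDpos x (lt_of_lt_of_le h1 hx.1))).le)
    linarith
  set A := 2 * C₁ ^ ((1:ℝ)/3) with hA
  have hC3 : (C₁ ^ ((1:ℝ)/3)) ^ 3 = C₁ := by
    rw [← Real.rpow_natCast (C₁ ^ ((1:ℝ)/3)) 3, ← Real.rpow_mul hC₁.le]
    norm_num
  have hA3 : A ^ 3 = 8 * C₁ := by
    rw [hA, mul_pow, hC3]; norm_num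
  have hApos : 0 < A := by positivity
  have main : ∀ t, 0 < t → t ^ ((2:ℝ)/3) * M t ≤ A := by
    by_contra hcon
    push_neg at hcon
    obtain ⟨t', ht', hft'⟩ := hcon
    set B := (A + t' ^ ((2:ℝ)/3) * M t') / 2 with hB
    have hAB : A < B := by rw [hB]; linarith
    have hBf : B < t' ^ ((2:ℝ)/3) * M t' := by rw [hB]; linarith
    have hBpos : 0 < B := hApos.trans hAB
    have hev : ∀ᶠ t in nhdsWithin 0 (Set.Ioi 0), t ^ ((2:ℝ)/3) * M t < B :=
      hlim.eventually_lt_const hBpos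
    rw [eventually_nhdsWithin_iff, Metric.eventually_nhds_iff] at hev
    obtain ⟨δ, hδpos, hδ⟩ := hev
    have hsmall : ∀ t : ℝ, 0 < t → t < δ → t ^ ((2:ℝ)/3) * M t < B := by
      intro t h0 hlt
      have hd : dist t 0 < δ := by
        rw [Real.dist_eq, sub_zero, abs_of_pos h0]; exact hlt
      exact hδ hd h0
    set S := {t : ℝ | δ ≤ t ∧ t ≤ t' ∧ B ≤ t ^ ((2:ℝ)/3) * M t} with hS
    have hδt' : δ ≤ t' := by
      by_contra h
      push_neg at h
      exact absurd (hsmall t' ht' h) (not_lt.mpr hBf.le)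
    have ht'S : t' ∈ S := ⟨hδt', le_refl _, hBf.le⟩
    have hSne : S.Nonempty := ⟨t', ht'S⟩
    have hSbdd : BddBelow S := ⟨δ, fun x hx => hx.1⟩
    have hf_cont : ContinuousOn (fun t : ℝ => t ^ ((2:ℝ)/3) * M t) (Set.Ioi 0) := by
      apply ContinuousOn.mul _ hMcont
      intro t ht
      exact (Real.continuousAt_rpow_const t _ (Or.inl (ne_of_gt ht))).continuousWithinAt
    have hSclosed : IsClosed S := by
      have hrepr : S = Set.Icc δ t' ∩
          (fun t : ℝ => t ^ ((2:ℝ)/3) * M t) ⁻¹' Set.Ici B := by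
        ext x; simp [hS, Set.mem_Icc]; tauto
      rw [hrepr]
      exact ContinuousOn.preimage_isClosed_of_isClosed
        (hf_cont.mono (fun x hx => hδpos.trans_le hx.1)) isClosed_Icc isClosed_Ici
    set t₀ := sInf S with ht₀
    have ht₀S : t₀ ∈ S := hSclosed.csInf_mem hSne hSbdd
    obtain ⟨hδt₀, ht₀t', hft₀⟩ := ht₀S
    have ht₀pos : 0 < t₀ := hδpos.trans_le hδt₀
    have hhalfpos : 0 < t₀ / 2 := by linarith
    have hhalflt : t₀ / 2 < t₀ := by linarith
    have hfhalf : (t₀/2) ^ ((2:ℝ)/3) * M (t₀/2) < B := by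
      rcases lt_or_ge (t₀/2) δ with h | h
      · exact hsmall _ hhalfpos h
      · by_contra hcon2
        push_neg at hcon2
        have hmem : t₀/2 ∈ S := ⟨h, by linarith, hcon2⟩
        have := csInf_le hSbdd hmem
        rw [← ht₀] at this
        linarith
    set m := M t₀ with hm
    set a := M (t₀/2) with ha
    have hmnn : 0 ≤ m := hMnn t₀ ht₀pos
    have hrpos : 0 < t₀ ^ ((2:ℝ)/3) := Real.rpow_pos_of_pos ht₀pos _
    have hm_pos : 0 < m := by
      rcases hmnn.lt_or_eq with h | h
      · exact h
      · exfalso; rw [← h] at hft₀; simp at hft₀; linarith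
    rcases lt_or_ge (2 * m) a with hcase | hcase
    · -- Case 1 : M(t₀/2) > 2 M(t₀)
      have h23 : (t₀/2 : ℝ) ^ ((2:ℝ)/3) = t₀ ^ ((2:ℝ)/3) / 2 ^ ((2:ℝ)/3) := by
        rw [Real.div_rpow ht₀pos.le (by norm_num : (0:ℝ) ≤ 2)]
      have h2pos : (0:ℝ) < 2 ^ ((2:ℝ)/3) := Real.rpow_pos_of_pos (by norm_num) _
      have hmul : (2:ℝ) ^ ((1:ℝ)/3) * 2 ^ ((2:ℝ)/3) = 2 := by
        rw [← Real.rpow_add (by norm_num)]; norm_num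
      have hone : (1:ℝ) < 2 ^ ((1:ℝ)/3) := by
        rw [show (1:ℝ) = (2:ℝ) ^ (0:ℝ) by simp]
        exact Real.rpow_lt_rpow_left_iff (by norm_num) |>.mpr (by norm_num)
      have e1 : (t₀/2) ^ ((2:ℝ)/3) * (2*m) < (t₀/2) ^ ((2:ℝ)/3) * a :=
        mul_lt_mul_of_pos_left hcase (Real.rpow_pos_of_pos hhalfpos _)
      have e2 : (t₀/2) ^ ((2:ℝ)/3) * (2*m)
          = 2 ^ ((1:ℝ)/3) * (t₀ ^ ((2:ℝ)/3) * m) := by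
        rw [h23, div_mul_eq_mul_div, div_eq_iff h2pos.ne']
        linear_combination (-(t₀ ^ ((2:ℝ)/3) * m)) * hmul
      rw [e2] at e1
      nlinarith [hft₀, hone, hBpos, hfhalf, e1]
    · -- Case 2 : M(t₀/2) ≤ 2 M(t₀)
      have hsub : Set.Icc (t₀/2) t₀ ⊆ Set.Ioi (0:ℝ) :=
        fun x hx => lt_of_lt_of_le hhalfpos hx.1
      have huIcc : Set.uIcc (t₀/2) t₀ = Set.Icc (t₀/2) t₀ := Set.uIcc_of_le hhalflt.le
      have hk := key (t₀/2) t₀ hhalfpos hhalflt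
      have hMlow : ∀ s ∈ Set.Icc (t₀/2) t₀, m ≤ M s := by
        intro s hs
        rcases eq_or_lt_of_le hs.2 with h | h
        · rw [hm, h]
        · exact hanti s t₀ (hsub hs) h
      have hJcs := aux_cs D (t₀/2) t₀ hhalflt (fun s hs => hDpos s (hsub hs))
        (hDcont.mono hsub)
      set I := ∫ s in (t₀/2)..t₀, D s with hI
      set J := ∫ s in (t₀/2)..t₀, 1 / D s with hJ
      have hDc := hDcont.mono hsub
      have hIntD : IntervalIntegrable D volume (t₀/2) t₀ :=
        (hDc.mono huIcc.le).intervalIntegrable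
      have hIpos : 0 < I := by
        apply intervalIntegral_pos_of_pos_on hIntD _ hhalflt
        intro s hs
        exact hDpos s (hsub ⟨hs.1.le, hs.2.le⟩)
      have hIle : I ≤ 2 * m := by
        have h2 := hii (t₀/2) t₀ hhalfpos hhalflt
        have h3 := hEnn t₀ ht₀pos
        have h4 := hiii (t₀/2) hhalfpos
        rw [← hI] at h2
        linarith
      have hinvc : ContinuousOn (fun s => 1 / D s) (Set.Icc (t₀/2) t₀) :=
        ContinuousOn.div continuousOn_const hDc fun s hs => (hDpos s (hsub hs)).ne'
      have hGc : ContinuousOn (fun s => (M s) ^ 5 / (C₁ * D s)) (Set.Icc (t₀/2) t₀) :=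
        ((hMcont.mono hsub).pow 5).div (continuousOn_const.mul hDc)
          (fun s hs => (mul_pos hC₁ (hDpos s (hsub hs))).ne')
      have hKlow : (m ^ 5 / C₁) * J ≤ ∫ s in (t₀/2)..t₀, (M s) ^ 5 / (C₁ * D s) := by
        have heq : ∫ s in (t₀/2)..t₀, (m ^ 5 / C₁) * (1 / D s) = (m ^ 5 / C₁) * J := by
          rw [hJ, intervalIntegral.integral_const_mul]
        rw [← heq]
        apply intervalIntegral.integral_mono_on hhalflt.le
          (((continuousOn_const.mul hinvc).mono huIcc.le).intervalIntegrable)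
          ((hGc.mono huIcc.le).intervalIntegrable)
        intro s hs
        have hDs := hDpos s (hsub hs)
        have hM5 : m ^ 5 ≤ (M s) ^ 5 := pow_le_pow_left₀ hmnn (hMlow s hs) 5
        have hlhs : (m ^ 5 / C₁) * (1 / D s) = m ^ 5 / (C₁ * D s) := by
          field_simp
        show (m ^ 5 / C₁) * (1 / D s) ≤ (M s) ^ 5 / (C₁ * D s)
        rw [hlhs]
        gcongr
      have hJlow : (t₀/2) ^ 2 / I ≤ J := by
        have hh : (t₀/2) ^ 2 ≤ I * J := by
          have he : t₀ - t₀/2 = t₀/2 := by ring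
          rwa [he] at hJcs
        rw [div_le_iff₀ hIpos]
        linarith [hh, mul_comm I J]
      have hfinal : m ^ 3 * t₀ ^ 2 ≤ 8 * C₁ := by
        have hc : 0 ≤ m ^ 5 / C₁ := div_nonneg (pow_nonneg hmnn 5) hC₁.le
        have h2m : (0:ℝ) < 2 * m := by linarith
        have h5 : (m ^ 5 / C₁) * ((t₀/2) ^ 2 / I) ≤ (m ^ 5 / C₁) * J :=
          mul_le_mul_of_nonneg_left hJlow hc
        have h6 : (m ^ 5 / C₁) * ((t₀/2) ^ 2 / (2*m)) ≤ (m ^ 5 / C₁) * ((t₀/2) ^ 2 / I) :=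
          mul_le_mul_of_nonneg_left
            (div_le_div_of_nonneg_left (sq_nonneg _) hIpos hIle) hc
        have h7 : (m ^ 5 / C₁) * J ≤ a - m := by linarith [hk, hKlow]
        have h8 : (m ^ 5 / C₁) * ((t₀/2) ^ 2 / (2*m)) ≤ m := by linarith
        have h9 : (m ^ 5 / C₁) * ((t₀/2) ^ 2 / (2*m)) = m ^ 4 * t₀ ^ 2 / (8 * C₁) := by
          rw [div_mul_div_comm,
            div_eq_div_iff (mul_pos hC₁ h2m).ne' (by positivity : (0:ℝ) < 8 * C₁).ne']
          ring
        rw [h9, div_le_iff₀ (by positivity : (0:ℝ) < 8 * C₁)] at h8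
        nlinarith [hm_pos, h8]
      have hX3 : (t₀ ^ ((2:ℝ)/3)) ^ 3 = t₀ ^ 2 := by
        rw [← Real.rpow_natCast (t₀ ^ ((2:ℝ)/3)) 3, ← Real.rpow_mul ht₀pos.le]
        norm_num
      have hB3 : B ^ 3 ≤ (t₀ ^ ((2:ℝ)/3) * m) ^ 3 := pow_le_pow_left₀ hBpos.le hft₀ 3
      rw [mul_pow, hX3] at hB3
      have hA3lt : A ^ 3 < B ^ 3 := pow_lt_pow_left₀ hAB hApos.le (by norm_num)
      rw [hA3] at hA3lt
      nlinarith [hB3, hA3lt, hfinal]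
  intro t ht
  have h := main t ht
  have htp : 0 < t ^ ((2:ℝ)/3) := Real.rpow_pos_of_pos ht _
  have hdiv : M t ≤ A / t ^ ((2:ℝ)/3) := by
    rw [le_div_iff₀ htp]
    nlinarith [h]
  have hrw : A / t ^ ((2:ℝ)/3) = 2 * C₁ ^ ((1:ℝ)/3) * t ^ (-(2:ℝ)/3) := by
    rw [show (-(2:ℝ))/3 = -((2:ℝ)/3) by norm_num, Real.rpow_neg ht.le, hA]
    ring
  exact hdiv.trans (le_of_eq hrw)
end
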